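/- Let N be an odd positive integer and define the discrete Hilbert transform H_Δ on sequences u : ℤ/N → ℂ as the circular convolution (H_Δ u)_n = ∑_{j=0}^{N−1} d_{n−j} u_j, where d_n = (1/N)·cot(πn/(2N)) for odd n in {1,…,N−1}, d_n = −(1/N)·tan(πn/(2N)) for even n in {1,…,N−1}, and d_0 = 0. Then H_Δ u = F^{−1}(−i·S_odd · (F u)), where F is the discrete Fourier transform and S_odd is multiplication by the diagonal sequence (0, 1,…,1, −1,…,−1) with (N−1)/2 ones followed by (N−1)/2 negative ones. -/

import Mathlib

open Finset

/-- The kernel of the discrete Hilbert transform for odd `N`. -/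
noncomputable def benjaminKernel (N : ℕ) (n : ZMod N) : ℝ :=
  if Odd n.val then (1 / (N : ℝ)) * Real.cot (Real.pi * (n.val : ℝ) / (2 * (N : ℝ)))
  else -(1 / (N : ℝ)) * Real.tan (Real.pi * (n.val : ℝ) / (2 * (N : ℝ)))

/-- The discrete sign symbol for odd `N`: `(0, 1, …, 1, -1, …, -1)` with `(N-1)/2`
ones followed by `(N-1)/2` negative ones. -/
def sgnTilde (N : ℕ) (k : ZMod N) : ℝ :=
  if k.val = 0 then 0 else if k.val ≤ (N - 1) / 2 then 1 else -1

/-- The discrete Fourier transform of `u : ZMod N → ℂ`. -/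
noncomputable def dft (N : ℕ) [NeZero N] (u : ZMod N → ℂ) (k : ZMod N) : ℂ :=
  ∑ n : ZMod N, u n * Complex.exp (-2 * Real.pi * Complex.I * (n.val : ℂ) * (k.val : ℂ) / (N : ℂ))

/-- The inverse discrete Fourier transform of `v : ZMod N → ℂ`. -/
noncomputable def idft (N : ℕ) [NeZero N] (v : ZMod N → ℂ) (n : ZMod N) : ℂ :=
  (1 / (N : ℂ)) *
    ∑ k : ZMod N, v k * Complex.exp (2 * Real.pi * Complex.I * (n.val : ℂ) * (k.val : ℂ) / (N : ℂ))

/-- The discrete Hilbert transform: circular convolution with the kernel. -/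
noncomputable def discreteHilbert (N : ℕ) [NeZero N] (u : ZMod N → ℂ) (n : ZMod N) : ℂ :=
  ∑ j : ZMod N, ((benjaminKernel N (n - j) : ℝ) : ℂ) * u j

lemma sum_zmod_val (N : ℕ) [NeZero N] (f : ℕ → ℂ) :
    ∑ k : ZMod N, f k.val = ∑ k ∈ Finset.range N, f k := by
  refine Finset.sum_nbij' (i := fun k : ZMod N => k.val) (j := fun k : ℕ => (k : ZMod N))
    (fun a _ => Finset.mem_range.mpr (ZMod.val_lt a)) (fun a _ => Finset.mem_univ _)
    (fun a _ => ZMod.natCast_rightInverse a)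
    (fun a ha => ZMod.val_cast_of_lt (Finset.mem_range.mp ha)) (fun a _ => rfl)

lemma alg_odd (ζ : ℂ) (hζ0 : ζ ≠ 0) (hm : ζ^2 - 1 ≠ 0) (hp : ζ^2 + 1 ≠ 0) :
    ((ζ + ζ⁻¹)/2) / ((ζ⁻¹ - ζ) * Complex.I / 2)
      = (-Complex.I) * (2 * ((-1) * ζ^2 - 1)/(ζ^4 - 1) - 1) := by
  have h4 : ζ^4 - 1 ≠ 0 := by
    intro h
    have h0 : (ζ^2 - 1) * (ζ^2 + 1) = 0 := by linear_combination h
    rcases mul_eq_zero.mp h0 with h' | h'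
    · exact hm h'
    · exact hp h'
  have hd : (ζ⁻¹ - ζ) ≠ 0 := by
    intro h
    apply hm
    have h2 := congrArg (· * ζ) h
    simp only [sub_mul, inv_mul_cancel₀ hζ0, zero_mul] at h2
    linear_combination -h2
  have hI : Complex.I ≠ 0 := Complex.I_ne_zero
  have hden : (ζ⁻¹ - ζ) * Complex.I / 2 ≠ 0 :=
    div_ne_zero (mul_ne_zero hd hI) two_ne_zero
  rw [div_eq_iff hden]
  field_simp
  linear_combination (Complex.I_sq) * (-1 - ζ^2 + ζ^4 + ζ^6)

lemma alg_even (ζ : ℂ) (hζ0 : ζ ≠ 0) (hm : ζ^2 - 1 ≠ 0) (hp : ζ^2 + 1 ≠ 0) :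
    -(((ζ⁻¹ - ζ) * Complex.I / 2) / ((ζ + ζ⁻¹)/2))
      = (-Complex.I) * (2 * (1 * ζ^2 - 1)/(ζ^4 - 1) - 1) := by
  have h4 : ζ^4 - 1 ≠ 0 := by
    intro h
    have h0 : (ζ^2 - 1) * (ζ^2 + 1) = 0 := by linear_combination h
    rcases mul_eq_zero.mp h0 with h' | h'
    · exact hm h'
    · exact hp h'
  have hd : (ζ + ζ⁻¹) ≠ 0 := by
    intro h
    apply hp
    have h2 := congrArg (· * ζ) h
    simp only [add_mul, inv_mul_cancel₀ hζ0, zero_mul] at h2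
    linear_combination h2
  have hden : (ζ + ζ⁻¹) / 2 ≠ 0 := div_ne_zero hd two_ne_zero
  rw [neg_eq_iff_eq_neg, div_eq_iff hden]
  field_simp
  ring_nf

lemma kernel_dft (N : ℕ) [NeZero N] (hN : Odd N) (m : ZMod N) :
    ((benjaminKernel N m : ℝ) : ℂ)
      = (1/(N:ℂ)) * ∑ k : ZMod N, (-Complex.I * (sgnTilde N k : ℂ)) *
          Complex.exp (2 * Real.pi * Complex.I * (m.val : ℂ) * (k.val : ℂ) / (N:ℂ)) := by
  obtain ⟨M, hNM⟩ := hN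
  have hM : (N - 1) / 2 = M := by omega
  have hN0 : (N:ℂ) ≠ 0 := Nat.cast_ne_zero.mpr (by omega)
  have haN : m.val < N := ZMod.val_lt m
  set a := m.val with ha
  set w : ℂ := Complex.exp (2 * Real.pi * Complex.I * (a:ℂ) / N) with hw
  have hwk : ∀ k : ℕ, Complex.exp (2 * Real.pi * Complex.I * (a:ℂ) * (k:ℂ) / N) = w ^ k := by
    intro k
    rw [hw, ← Complex.exp_nat_mul]
    congr 1
    ring
  set g : ℕ → ℂ := fun k =>
    (-Complex.I * (((if k = 0 then 0 else if k ≤ M then 1 else -1 : ℝ)) : ℂ)) * w ^ k with hg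
  have hsum : (∑ k : ZMod N, (-Complex.I * (sgnTilde N k : ℂ)) *
        Complex.exp (2 * Real.pi * Complex.I * (a : ℂ) * (k.val : ℂ) / (N:ℂ)))
      = ∑ k ∈ Finset.range N, g k := by
    rw [← sum_zmod_val N g]
    refine Finset.sum_congr rfl fun k _ => ?_
    rw [hg]
    simp only [sgnTilde, hM, hwk]
  rw [hsum]
  have hsplit : ∑ k ∈ Finset.range N, g k
      = g 0 + ((∑ k ∈ Finset.Ico 1 (M+1), g k) + ∑ k ∈ Finset.Ico (M+1) N, g k) := by
    rw [Finset.sum_Ico_consecutive _ (by omega : 1 ≤ M+1) (by omega : M+1 ≤ N),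
      Finset.range_eq_Ico,
      ← Finset.sum_Ico_consecutive _ (Nat.zero_le 1) (by omega : 1 ≤ N)]
    congr 1
    simp [Finset.sum_Ico_eq_sum_range]
  have hg0 : g 0 = 0 := by simp [hg]
  have hgl : (∑ k ∈ Finset.Ico 1 (M+1), g k) = -Complex.I * ∑ k ∈ Finset.Ico 1 (M+1), w ^ k := by
    rw [Finset.mul_sum]
    refine Finset.sum_congr rfl fun k hk => ?_
    rw [Finset.mem_Ico] at hk
    rw [hg]
    simp only []
    rw [if_neg (by omega), if_pos (by omega)]
    norm_num
  have hgr : (∑ k ∈ Finset.Ico (M+1) N, g k) = Complex.I * ∑ k ∈ Finset.Ico (M+1) N, w ^ k := by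
    rw [Finset.mul_sum]
    refine Finset.sum_congr rfl fun k hk => ?_
    rw [Finset.mem_Ico] at hk
    rw [hg]
    simp only []
    rw [if_neg (by omega), if_neg (by omega)]
    push_cast
    ring
  rw [hsplit, hg0, hgl, hgr, zero_add]
  by_cases ha0 : a = 0
  · -- zero frequency
    have hw1 : w = 1 := by
      rw [hw, ha0]
      norm_num
    have hbk : benjaminKernel N m = 0 := by
      rw [benjaminKernel, ← ha, ha0]
      norm_num
    rw [hbk, hw1]
    simp only [one_pow, Finset.sum_const, Nat.card_Ico, nsmul_eq_mul, mul_one]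
    rw [show M + 1 - 1 = M from by omega, show N - (M+1) = M from by omega]
    push_cast
    ring
  · -- nonzero frequency
    have hapos : 0 < a := Nat.pos_of_ne_zero ha0
    have hwN : w ^ N = 1 := by
      rw [hw, ← Complex.exp_nat_mul,
        show (N:ℂ) * (2 * (Real.pi:ℂ) * Complex.I * a / N) = (a:ℂ) * (2 * Real.pi * Complex.I)
          from by field_simp]
      have h := Complex.exp_int_mul_two_pi_mul_I (a:ℤ)
      push_cast at h
      exact h
    have hw1 : w ≠ 1 := by
      rw [hw]
      intro h
      obtain ⟨t, ht⟩ := Complex.exp_eq_one_iff.mp h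
      have hπ : (Real.pi:ℂ) ≠ 0 := by exact_mod_cast Real.pi_ne_zero
      have hI : Complex.I ≠ 0 := Complex.I_ne_zero
      field_simp at ht
      have h2 : (2*(Real.pi:ℂ)*Complex.I) * (a:ℂ)
          = (2*(Real.pi:ℂ)*Complex.I) * ((t:ℂ)*(N:ℂ)) := by linear_combination (2*(Real.pi:ℂ)*Complex.I) * ht
      have h3 : (a:ℂ) = (t:ℂ)*(N:ℂ) :=
        mul_left_cancel₀ (mul_ne_zero (mul_ne_zero two_ne_zero hπ) hI) h2
      have h4 : (a:ℤ) = t * (N:ℤ) := by exact_mod_cast h3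
      have hNZ : (0:ℤ) < (N:ℤ) := by exact_mod_cast (by omega : 0 < N)
      have hA1 : (0:ℤ) < (a:ℤ) := by exact_mod_cast hapos
      have hA2 : (a:ℤ) < (N:ℤ) := by exact_mod_cast haN
      rcases le_or_gt t 0 with ht0 | ht0
      · nlinarith
      · have ht1 : (1:ℤ) ≤ t := ht0
        nlinarith
    have hwm1 : w - 1 ≠ 0 := sub_ne_zero.mpr hw1
    set ζ : ℂ := Complex.exp ((Real.pi:ℂ) * a * Complex.I / (2*N)) with hζ
    have hζ0 : ζ ≠ 0 := Complex.exp_ne_zero _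
    have hζ4 : w = ζ^4 := by
      rw [hw, hζ, ← Complex.exp_nat_mul]
      congr 1
      field_simp
      ring
    have hζ2 : ζ^2 = Complex.exp ((Real.pi:ℂ) * a * Complex.I / N) := by
      rw [hζ, ← Complex.exp_nat_mul]
      congr 1
      field_simp
      ring
    have hζ2N : (ζ^2)^N = (-1:ℂ)^a := by
      rw [hζ2, ← Complex.exp_nat_mul,
        show (N:ℂ) * ((Real.pi:ℂ) * a * Complex.I / N) = (a:ℕ) * ((Real.pi:ℂ) * Complex.I)
          from by field_simp,
        Complex.exp_nat_mul, Complex.exp_pi_mul_I]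
    have hMw : w^(M+1) = (-1:ℂ)^a * ζ^2 := by
      rw [hζ4, ← pow_mul, show 4*(M+1) = 2*N + 2 from by omega, pow_add,
        show ζ^(2*N) = (ζ^2)^N from by rw [← pow_mul], hζ2N]
    have hm2 : ζ^2 - 1 ≠ 0 := by
      intro h
      apply hw1
      rw [hζ4, show ζ^4 = (ζ^2)^2 from by ring, show ζ^2 = 1 from by linear_combination h]
      norm_num
    have hp2 : ζ^2 + 1 ≠ 0 := by
      intro h
      apply hw1
      rw [hζ4, show ζ^4 = (ζ^2)^2 from by ring, show ζ^2 = -1 from by linear_combination h]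
      norm_num
    have hS1 : (∑ k ∈ Finset.Ico 1 (M+1), w ^ k) = (w^(M+1) - 1)/(w-1) - 1 := by
      rw [Finset.sum_Ico_eq_sub _ (by omega : 1 ≤ M+1), geom_sum_eq hw1]
      simp
    have hS2 : (∑ k ∈ Finset.Ico (M+1) N, w ^ k) = -((w^(M+1) - 1)/(w-1)) := by
      rw [Finset.sum_Ico_eq_sub _ (by omega : M+1 ≤ N), geom_sum_eq hw1, geom_sum_eq hw1, hwN]
      simp
    rw [hS1, hS2, hMw, hζ4]
    rcases Nat.even_or_odd a with hpar | hpar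
    · have hodd : ¬ Odd a := Nat.not_odd_iff_even.mpr hpar
      have hneg1 : ((-1:ℂ))^a = 1 := hpar.neg_one_pow
      rw [benjaminKernel, ← ha, if_neg hodd, hneg1]
      set x : ℝ := Real.pi * (a:ℝ) / (2*(N:ℝ)) with hx
      have hexp : Complex.exp ((x:ℂ) * Complex.I) = ζ := by
        rw [hζ]
        congr 1
        push_cast [hx]
        ring
      have hexp' : Complex.exp (-(x:ℂ) * Complex.I) = ζ⁻¹ := by
        rw [neg_mul, Complex.exp_neg, hexp]
      have hker : ((-(1/(N:ℝ)) * Real.tan x : ℝ) : ℂ)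
          = -((1/(N:ℂ)) * (((ζ⁻¹ - ζ) * Complex.I / 2) / ((ζ + ζ⁻¹)/2))) := by
        push_cast [Complex.ofReal_tan]
        rw [Complex.tan_eq_sin_div_cos, Complex.sin, Complex.cos, hexp, hexp']
        ring
      rw [hker]
      linear_combination (1/(N:ℂ)) * alg_even ζ hζ0 hm2 hp2
    · have hneg1 : ((-1:ℂ))^a = -1 := hpar.neg_one_pow
      rw [benjaminKernel, ← ha, if_pos hpar, hneg1]
      set x : ℝ := Real.pi * (a:ℝ) / (2*(N:ℝ)) with hx
      have hexp : Complex.exp ((x:ℂ) * Complex.I) = ζ := by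
        rw [hζ]
        congr 1
        push_cast [hx]
        ring
      have hexp' : Complex.exp (-(x:ℂ) * Complex.I) = ζ⁻¹ := by
        rw [neg_mul, Complex.exp_neg, hexp]
      have hker : (((1/(N:ℝ)) * Real.cot x : ℝ) : ℂ)
          = (1/(N:ℂ)) * (((ζ + ζ⁻¹)/2) / ((ζ⁻¹ - ζ) * Complex.I / 2)) := by
        push_cast [Complex.ofReal_cot]
        rw [Complex.cot_eq_cos_div_sin, Complex.sin, Complex.cos, hexp, hexp']
      rw [hker]
      linear_combination (1/(N:ℂ)) * alg_odd ζ hζ0 hm2 hp2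

lemma exp_val_mul (N : ℕ) [NeZero N] (n j k : ZMod N) :
    Complex.exp (2 * Real.pi * Complex.I * ((n - j).val : ℂ) * (k.val : ℂ) / N)
      = Complex.exp (2 * Real.pi * Complex.I * (n.val : ℂ) * (k.val : ℂ) / N)
        * Complex.exp (-2 * Real.pi * Complex.I * (j.val : ℂ) * (k.val : ℂ) / N) := by
  have hd : (((n.val : ℤ) - (j.val : ℤ) - ((n - j).val : ℤ) : ℤ) : ZMod N) = 0 := by
    push_cast
    rw [ZMod.natCast_val, ZMod.natCast_val, ZMod.natCast_val]
    simp [ZMod.cast_id]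
  obtain ⟨t, ht⟩ : (N : ℤ) ∣ ((n.val : ℤ) - (j.val : ℤ) - ((n - j).val : ℤ)) :=
    (ZMod.intCast_zmod_eq_zero_iff_dvd _ _).mp hd
  rw [← Complex.exp_add]
  have hN : (N : ℂ) ≠ 0 := Nat.cast_ne_zero.mpr (NeZero.ne N)
  have hc : ((n.val : ℂ)) - (j.val : ℂ) = ((n - j).val : ℂ) + (N : ℂ) * (t : ℂ) := by
    have h2 : (n.val : ℤ) - (j.val : ℤ) = ((n - j).val : ℤ) + (N : ℤ) * t := by linarith
    exact_mod_cast congrArg (fun z : ℤ => (z : ℂ)) h2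
  have harg : 2 * (Real.pi : ℂ) * Complex.I * ((n.val : ℕ) : ℂ) * (k.val : ℂ) / N +
      -2 * (Real.pi : ℂ) * Complex.I * ((j.val : ℕ) : ℂ) * (k.val : ℂ) / N
      = 2 * (Real.pi : ℂ) * Complex.I * (((n - j).val : ℂ)) * (k.val : ℂ) / N
        + ((t * (k.val : ℤ) : ℤ) : ℂ) * (2 * Real.pi * Complex.I) := by
    rw [← add_div, eq_comm]
    have hD : ((t * (k.val : ℤ) : ℤ) : ℂ) * (2 * Real.pi * Complex.I)
        = ((t * (k.val : ℤ) : ℤ) : ℂ) * (2 * Real.pi * Complex.I) * (N : ℂ) / (N : ℂ) := by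
      rw [mul_div_cancel_right₀ _ hN]
    rw [hD, ← add_div]
    congr 1
    push_cast
    linear_combination (-(2 * (Real.pi : ℂ) * Complex.I * (k.val : ℂ))) * hc
  rw [harg, Complex.exp_add, Complex.exp_int_mul_two_pi_mul_I, mul_one]

theorem discreteHilbert_eq_idft_sgn_dft (N : ℕ) [NeZero N] (hN : Odd N) (u : ZMod N → ℂ) :
    discreteHilbert N u
      = idft N (fun k => -Complex.I * (sgnTilde N k : ℂ) * dft N u k) := by
  funext n
  rw [discreteHilbert, idft]
  calc
    (∑ j : ZMod N, ((benjaminKernel N (n - j) : ℝ) : ℂ) * u j)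
        = ∑ j : ZMod N, ∑ k : ZMod N, (1/(N:ℂ)) *
            (((-Complex.I * (sgnTilde N k : ℂ)) *
              (u j * Complex.exp (-2 * Real.pi * Complex.I * (j.val:ℂ) * (k.val:ℂ) / N))) *
              Complex.exp (2 * Real.pi * Complex.I * (n.val:ℂ) * (k.val:ℂ) / N)) := by
      refine Finset.sum_congr rfl fun j _ => ?_
      rw [kernel_dft N hN (n - j), Finset.mul_sum, Finset.sum_mul]
      refine Finset.sum_congr rfl fun k _ => ?_
      rw [exp_val_mul N n j k]
      ring
    _ = ∑ k : ZMod N, ∑ j : ZMod N, (1/(N:ℂ)) *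
            (((-Complex.I * (sgnTilde N k : ℂ)) *
              (u j * Complex.exp (-2 * Real.pi * Complex.I * (j.val:ℂ) * (k.val:ℂ) / N))) *
              Complex.exp (2 * Real.pi * Complex.I * (n.val:ℂ) * (k.val:ℂ) / N)) :=
      Finset.sum_comm
    _ = (1 / (N : ℂ)) * ∑ k : ZMod N, (-Complex.I * (sgnTilde N k : ℂ) * dft N u k) *
          Complex.exp (2 * Real.pi * Complex.I * (n.val : ℂ) * (k.val : ℂ) / (N : ℂ)) := by
      simp only [dft, Finset.mul_sum, Finset.sum_mul]
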